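/- For integer a ≥ 1 and x > 0, ∫_0^x π(a,z) dz = x − Σ_{i=0}^{a−1} π(i+1, x), where π(a,x) is the Poisson upper-tail function. -/

import Mathlib

/-- The Poisson probability mass function `Po[α](i)`. -/
noncomputable def poissonPMF (α : ℝ) (i : ℕ) : ℝ :=
  Real.exp (-α) * α ^ i / (i.factorial : ℝ)

/-- The Poisson upper tail `π(a,x) = Σ_{i ≥ a} Po[x](i)`. -/
noncomputable def poissonTail (a : ℕ) (x : ℝ) : ℝ :=
  ∑' i : ℕ, (if a ≤ i then poissonPMF x i else 0)

lemma summable_poissonPMF (x : ℝ) : Summable (poissonPMF x) := by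
  have h := (Real.summable_pow_div_factorial x).mul_left (Real.exp (-x))
  refine h.congr fun i => ?_
  simp [poissonPMF, mul_div_assoc]

lemma tsum_poissonPMF (x : ℝ) : ∑' i, poissonPMF x i = 1 := by
  have h : ∑' i : ℕ, x ^ i / (i.factorial : ℝ) = Real.exp x := by
    rw [Real.exp_eq_exp_ℝ, NormedSpace.exp_eq_tsum_div]
  calc ∑' i, poissonPMF x i = ∑' i : ℕ, Real.exp (-x) * (x ^ i / i.factorial) := by
        refine tsum_congr fun i => ?_; simp [poissonPMF, mul_div_assoc]
    _ = Real.exp (-x) * ∑' i : ℕ, x ^ i / (i.factorial : ℝ) := tsum_mul_left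
    _ = 1 := by rw [h, ← Real.exp_add]; simp

lemma poissonTail_eq (a : ℕ) (x : ℝ) :
    poissonTail a x = 1 - ∑ i ∈ Finset.range a, poissonPMF x i := by
  have hs := summable_poissonPMF x
  have hfin : Summable (fun i => if i < a then poissonPMF x i else 0) :=
    summable_of_ne_finset_zero (s := Finset.range a)
      (fun i hi => by simp [Finset.mem_range] at hi; simp [hi])
  have key : (fun i => if a ≤ i then poissonPMF x i else 0) =
      fun i => poissonPMF x i - (if i < a then poissonPMF x i else 0) := by
    funext i
    by_cases h : a ≤ i
    · simp [h, Nat.not_lt.mpr h]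
    · simp [h, Nat.lt_of_not_le h]
  rw [poissonTail, key, Summable.tsum_sub hs hfin, tsum_poissonPMF,
    tsum_eq_sum (s := Finset.range a) (fun i hi => by
      simp [Finset.mem_range] at hi; simp [hi])]
  congr 1
  exact Finset.sum_congr rfl fun b hb => if_pos (Finset.mem_range.mp hb)

lemma hasDerivAt_poissonPMF (k : ℕ) (z : ℝ) :
    HasDerivAt (fun z => poissonPMF z k)
      ((if k = 0 then 0 else poissonPMF z (k - 1)) - poissonPMF z k) z := by
  have he : HasDerivAt (fun z => Real.exp (-z)) (-Real.exp (-z)) z := by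
    simpa [Function.comp_def] using (Real.hasDerivAt_exp (-z)).comp z (hasDerivAt_neg z)
  have hp : HasDerivAt (fun z : ℝ => z ^ k) (k * z ^ (k - 1)) z := by
    simpa using hasDerivAt_pow k z
  have h := (he.mul hp).div_const (k.factorial : ℝ)
  refine h.congr_deriv ?_
  rcases Nat.eq_zero_or_pos k with hk | hk
  · subst hk; simp [poissonPMF]
  · have hfac : (k.factorial : ℝ) = k * ((k - 1).factorial : ℝ) := by
      exact_mod_cast (Nat.mul_factorial_pred hk.ne').symm
    rw [if_neg hk.ne']
    have hk0 : (k : ℝ) ≠ 0 := Nat.cast_ne_zero.mpr hk.ne'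
    have hf0 : ((k-1).factorial : ℝ) ≠ 0 := Nat.cast_ne_zero.mpr (Nat.factorial_ne_zero _)
    unfold poissonPMF
    field_simp [poissonPMF, hfac]
    rw [hfac]
    ring

lemma hasDerivAt_sum_pmf (j : ℕ) (z : ℝ) :
    HasDerivAt (fun z => ∑ k ∈ Finset.range (j + 1), poissonPMF z k)
      (-poissonPMF z j) z := by
  induction j with
  | zero =>
    simpa using hasDerivAt_poissonPMF 0 z
  | succ j ih =>
    have h := ih.add (hasDerivAt_poissonPMF (j + 1) z)
    have h1 : HasDerivAt
        (fun z => ∑ k ∈ Finset.range (j + 2), poissonPMF z k)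
        (-poissonPMF z j + ((if j + 1 = 0 then 0 else poissonPMF z (j + 1 - 1)) -
          poissonPMF z (j + 1))) z := by
      refine h.congr_of_eventuallyEq (Filter.Eventually.of_forall fun w => ?_)
      simp [Finset.sum_range_succ]
    have h2 : -poissonPMF z j + ((if j + 1 = 0 then 0 else poissonPMF z (j + 1 - 1)) -
        poissonPMF z (j + 1)) = -poissonPMF z (j + 1) := by
      rw [if_neg (Nat.succ_ne_zero j)]
      simp only [Nat.add_sub_cancel]
      ring
    exact h2 ▸ h1

lemma continuous_pmf (k : ℕ) : Continuous (fun z : ℝ => poissonPMF z k) := by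
  unfold poissonPMF
  fun_prop

lemma integral_pmf (j : ℕ) (x : ℝ) :
    ∫ z in (0:ℝ)..x, poissonPMF z j = poissonTail (j + 1) x := by
  have hF : ∀ z ∈ Set.uIcc (0:ℝ) x,
      HasDerivAt (fun z => 1 - ∑ k ∈ Finset.range (j + 1), poissonPMF z k)
        (poissonPMF z j) z := fun z _ => by
    simpa using (hasDerivAt_sum_pmf j z).const_sub 1
  have := intervalIntegral.integral_eq_sub_of_hasDerivAt hF
    ((continuous_pmf j).intervalIntegrable 0 x)
  rw [this, poissonTail_eq]
  have h0 : ∑ k ∈ Finset.range (j + 1), poissonPMF 0 k = 1 := by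
    rw [Finset.sum_range_succ']
    have : ∀ k, poissonPMF 0 (k + 1) = 0 := fun k => by simp [poissonPMF]
    simp [this, poissonPMF]
  rw [h0]; ring

/-- For integer `a ≥ 1` and `x > 0`,
`∫_0^x π(a,z) dz = x − Σ_{i=0}^{a−1} π(i+1, x)`. -/
theorem poisson_tail_integral (a : ℕ) (ha : 1 ≤ a) (x : ℝ) (hx : 0 < x) :
    ∫ z in (0 : ℝ)..x, poissonTail a z =
      x - ∑ i ∈ Finset.range a, poissonTail (i + 1) x := by
  have hcongr : ∀ z, poissonTail a z = 1 - ∑ i ∈ Finset.range a, poissonPMF z i :=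
    fun z => poissonTail_eq a z
  rw [intervalIntegral.integral_congr (g := fun z => 1 - ∑ i ∈ Finset.range a, poissonPMF z i)
      (fun z _ => hcongr z)]
  have hint : IntervalIntegrable (fun z => ∑ i ∈ Finset.range a, poissonPMF z i)
      MeasureTheory.volume 0 x :=
    (continuous_finset_sum _ fun i _ => continuous_pmf i).intervalIntegrable 0 x
  have h1 : ∫ z in (0:ℝ)..x, (1 - ∑ i ∈ Finset.range a, poissonPMF z i) =
      (∫ _ in (0:ℝ)..x, (1:ℝ)) - ∫ z in (0:ℝ)..x, ∑ i ∈ Finset.range a, poissonPMF z i :=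
    intervalIntegral.integral_sub intervalIntegrable_const hint
  rw [h1, intervalIntegral.integral_finset_sum
    (fun i _ => (continuous_pmf i).intervalIntegrable 0 x)]
  simp [integral_pmf]
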